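/- Let p be an odd prime, q = p^r, and t > 4. The number of equivalence classes of the family of 𝔽_q-subspaces {U_h : h ∈ 𝔽_{q^n}, h^{q^t+1} = −1} of 𝔽_{q^n}² under ΓL(2,q^n)-equivalence is at least ⌊(q^t+1)/(4rt)⌋ if t ≢ 2 (mod 4), and at least ⌊(q^t+1)/(2rt(q²+1))⌋ if t ≡ 2 (mod 4). -/

import Mathlib

/-- The `q`-polynomial map `ψ_{h,t}(x) = x^q + x^{q^{t-1}} - h^{1-q^{t+1}} x^{q^{t+1}}
    + h^{1-q^{2t-1}} x^{q^{2t-1}}`, where `h^{1-q^j}` means `h / h^{q^j}`. -/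
def psiMap {F : Type*} [Field F] (q t : ℕ) (h : F) (x : F) : F :=
  x ^ q + x ^ q ^ (t - 1) - h / h ^ q ^ (t + 1) * x ^ q ^ (t + 1)
    + h / h ^ q ^ (2 * t - 1) * x ^ q ^ (2 * t - 1)

/-- The subspace `U_h = {(x, ψ_{h,t}(x)) : x ∈ 𝔽_{q^n}}`, as a set of column vectors. -/
def Uspace {F : Type*} [Field F] (q t : ℕ) (h : F) : Set (Fin 2 → F) :=
  {w | ∃ x : F, w = ![x, psiMap q t h x]}

/-- `U, W ⊆ 𝔽_{q^n}²` are `ΓL(2,q^n)`-equivalent: for some field automorphism `ρ` and some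
invertible matrix `A`, `A · ρ(U) = W`. -/
def GammaLEquiv {F : Type*} [Field F] (U W : Set (Fin 2 → F)) : Prop :=
  ∃ ρ : F ≃+* F, ∃ A : Matrix (Fin 2) (Fin 2) F, IsUnit A ∧
    (fun w => A.mulVec (fun i => ρ (w i))) '' U = W


open Polynomial Finset
set_option linter.unusedSectionVars false

namespace Stmt12Aux

variable {F : Type*} [Field F] [Fintype F]

/-- The characteristic of a finite field of cardinality `(p^r)^n` is `p`. -/
lemma charP_of_card (p r n : ℕ) (hp : p.Prime) (hr : 0 < r) (hn : 0 < n)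
    (hcard : Fintype.card F = (p ^ r) ^ n) : CharP F p := by
  obtain ⟨p', hp'inst⟩ := CharP.exists F
  haveI := hp'inst
  have hp' : p'.Prime := CharP.char_is_prime F p'
  obtain ⟨m, -, hm⟩ := FiniteField.card F p'
  have hdvd : p ∣ p' ^ (m : ℕ) := by
    rw [← hm, hcard, ← pow_mul]
    exact dvd_pow_self p (by positivity)
  have : p = p' := ((Nat.prime_dvd_prime_iff_eq hp hp').1 (hp.dvd_of_dvd_pow hdvd))
  rwa [this]

section Frob

variable (p : ℕ) [Fact p.Prime] [CharP F p]

lemma frob_add (s : ℕ) (x y : F) (q : ℕ) (hq : ∃ r, q = p ^ r) :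
    (x + y) ^ q ^ s = x ^ q ^ s + y ^ q ^ s := by
  obtain ⟨r, rfl⟩ := hq
  rw [← pow_mul, add_pow_char_pow, pow_mul]

lemma frob_inj (s : ℕ) (x y : F) (q : ℕ) (hq : ∃ r, q = p ^ r)
    (hxy : x ^ q ^ s = y ^ q ^ s) : x = y := by
  obtain ⟨r, rfl⟩ := hq
  rw [← pow_mul] at hxy
  have : (x - y) ^ p ^ (r * s) = 0 := by rw [sub_pow_char_pow, hxy, sub_self]
  have hne : p ^ (r * s) ≠ 0 := pow_ne_zero _ (Nat.Prime.ne_zero Fact.out)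
  have := pow_eq_zero_iff hne |>.mp this
  exact sub_eq_zero.mp this

end Frob

/-- Reduction of `q`-power exponents modulo the field cardinality. -/
lemma red (q n : ℕ) (hcard : Fintype.card F = q ^ n) (x : F) (s : ℕ) :
    x ^ q ^ (n + s) = x ^ q ^ s := by
  rw [pow_add, pow_mul, ← hcard, FiniteField.pow_card]

/-- Linear independence of distinct monomials of degree `< card F`. -/
lemma li {m : ℕ} (q n : ℕ) (hq : 2 ≤ q) (hcard : Fintype.card F = q ^ n)
    (e : Fin m → ℕ) (he : ∀ i, e i < n) (hinj : ∀ i j, e i = e j → i = j)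
    (co : Fin m → F) (hv : ∀ y : F, ∑ i, co i * y ^ q ^ e i = 0) : ∀ i, co i = 0 := by
  classical
  intro i
  have hn : 0 < n := (Nat.zero_le _).trans_lt (he i)
  set P : F[X] := ∑ i, Polynomial.C (co i) * X ^ (q ^ e i) with hP
  have hdeg : P.natDegree < Fintype.card F := by
    rw [hcard]
    have hle : P.natDegree ≤ q ^ (n - 1) :=
      natDegree_sum_le_of_forall_le _ _ (fun j _ =>
        le_trans (le_trans (natDegree_C_mul_le _ _) (natDegree_X_pow _).le)
          (Nat.pow_le_pow_right (by omega) (by have := he j; omega)))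
    refine lt_of_le_of_lt hle (Nat.pow_lt_pow_right (by omega) (by omega))
  have hz : P = 0 := by
    refine eq_zero_of_natDegree_lt_card_of_eval_eq_zero P Function.injective_id (fun y => ?_)
      (by simpa using hdeg)
    simp only [hP, eval_finset_sum, eval_mul, eval_C, eval_pow, eval_X, id]
    exact hv y
  have : P.coeff (q ^ e i) = co i := by
    rw [hP, finset_sum_coeff]
    rw [Finset.sum_eq_single i]
    · simp
    · intro j _ hji
      have hne : ¬ (q ^ e i = q ^ e j) := by
        intro hqe
        exact hji (hinj _ _ (Nat.pow_right_injective hq hqe.symm))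
      rw [coeff_C_mul, coeff_X_pow, if_neg hne, mul_zero]
    · simp
  rw [← this, hz, coeff_zero]

/-- If `w^(q^m) = w` then `w^(q^(c*m)) = w`. -/
lemma fixed_mul (q : ℕ) (w : F) (m : ℕ) (hm : w ^ q ^ m = w) :
    ∀ c, w ^ q ^ (m * c) = w := by
  intro c
  induction c with
  | zero => simp
  | succ c ih =>
    have : q ^ (m * (c + 1)) = q ^ (m * c) * q ^ m := by ring
    rw [this, pow_mul, ih, hm]

lemma fixed_dvd (q : ℕ) (w : F) (m s : ℕ) (hm : w ^ q ^ m = w) (hdvd : m ∣ s) :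
    w ^ q ^ s = w := by
  obtain ⟨c, rfl⟩ := hdvd
  exact fixed_mul q w m hm c

/-- Closure of the fixed exponents under gcd. -/
lemma fixed_gcd (q : ℕ) (w : F) : ∀ m n, w ^ q ^ m = w → w ^ q ^ n = w →
    w ^ q ^ (Nat.gcd m n) = w := by
  intro m
  induction m using Nat.strong_induction_on with
  | _ m ih =>
    intro n hm hn
    rcases Nat.eq_zero_or_pos m with rfl | hmpos
    · simpa [Nat.gcd_zero_left] using hn
    · rw [Nat.gcd_rec]
      refine ih (n % m) (Nat.mod_lt _ hmpos) m ?_ hm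
      have h1 : w ^ q ^ (m * (n / m) + n % m) = w ^ q ^ (n % m) := by
        rw [pow_add, pow_mul, fixed_mul q w m hm (n / m)]
      rw [Nat.div_add_mod n m] at h1
      rw [← h1]; exact hn

/-- Key consequence on `w` in the two congruence cases. -/
lemma w_cases (q t : ℕ) (hq2 : 2 ≤ q) (ht : 4 < t) (hcard : Fintype.card F = q ^ (2*t))
    (w : F) (h1 : w ^ q ^ (t-2) = w) (h2 : w ^ (q^t+1) = 1) :
    (t % 4 ≠ 2 → w ^ 2 = 1) ∧ (t % 4 = 2 → w ^ (q^2+1) = 1) := by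
  have h2t : w ^ q ^ (2*t) = w := by
    have := red q (2*t) hcard w 0
    simpa using this
  have hg : w ^ q ^ (Nat.gcd (t-2) (2*t)) = w := fixed_gcd q w _ _ h1 h2t
  have hgcd4 : Nat.gcd (t-2) (2*t) = Nat.gcd (t-2) 4 := by
    have h2t4 : 2*t = 4 + 2*(t-2) := by omega
    rw [h2t4]
    exact Nat.gcd_add_mul_right_right _ 4 2
  rw [hgcd4] at hg
  constructor
  · intro hne2
    have hdvdt : Nat.gcd (t-2) 4 ∣ t := by
      have h4 : Nat.gcd (t-2) 4 ∣ 4 := Nat.gcd_dvd_right _ _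
      have ht2 : Nat.gcd (t-2) 4 ∣ (t-2) := Nat.gcd_dvd_left _ _
      have hgpos : 0 < Nat.gcd (t-2) 4 := Nat.gcd_pos_of_pos_right _ (by norm_num)
      have hgle : Nat.gcd (t-2) 4 ≤ 4 := Nat.le_of_dvd (by norm_num) h4
      interval_cases hgi : (Nat.gcd (t-2) 4)
      · exact Nat.one_dvd _
      · obtain ⟨c, hc⟩ := ht2; omega
      · norm_num at h4
      · obtain ⟨c, hc⟩ := ht2; omega
    have hfix : w ^ q ^ t = w := fixed_dvd q w _ _ hg hdvdt
    have : w ^ (q^t+1) = w ^ 2 := by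
      rw [pow_add, pow_one, hfix, sq]
    rw [← this, h2]
  · intro he2
    have hg4 : Nat.gcd (t-2) 4 = 4 := Nat.gcd_eq_right (by omega)
    rw [hg4] at hg
    have hts : t = 4 * ((t-2)/4) + 2 := by omega
    have hfix : w ^ q ^ t = w ^ q ^ 2 := by
      calc w ^ q ^ t = (w ^ q ^ (4*((t-2)/4))) ^ q ^ 2 := by
            rw [← pow_mul, ← pow_add, ← hts]
        _ = w ^ q ^ 2 := by rw [fixed_dvd q w 4 _ hg ⟨_, rfl⟩]
    have : w ^ (q^t+1) = w ^ (q^2+1) := by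
      rw [pow_add, pow_add, hfix]
    rw [← this, h2]

/-- The number of solutions of `w ^ n = 1` is at most `n`. -/
lemma card_pow_eq_one_le (n : ℕ) (hn : 0 < n) [DecidablePred fun w : F => w ^ n = 1] :
    (Finset.univ.filter (fun w : F => w ^ n = 1)).card ≤ n := by
  classical
  refine le_trans (Finset.card_le_card (fun x hx => ?_))
    (le_trans (Multiset.toFinset_card_le _) (Polynomial.card_nthRoots n (1 : F)))
  rw [Multiset.mem_toFinset, Polynomial.mem_nthRoots hn]
  exact (Finset.mem_filter.mp hx).2

/-- Extraction of a large pairwise-unrelated subset. -/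
lemma extract {α : Type*} [DecidableEq α] (R : α → α → Prop) (T : α → Finset α) (M : ℕ)
    (hM : 0 < M) :
    ∀ H : Finset α, (∀ h ∈ H, ∀ k ∈ H, (R h k ∨ R k h ∨ k = h) → k ∈ T h) →
    (∀ h ∈ H, (T h).card ≤ M) →
    ∃ S : Finset α, S ⊆ H ∧ (∀ h ∈ S, ∀ k ∈ S, h ≠ k → ¬ R h k) ∧ H.card / M ≤ S.card := by
  intro H
  induction H using Finset.strongInduction with
  | _ H ih =>
    intro hT hTc
    rcases Finset.eq_empty_or_nonempty H with rfl | ⟨h, hh⟩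
    · exact ⟨∅, by simp⟩
    · have hhT : h ∈ T h := hT h hh h hh (Or.inr (Or.inr rfl))
      have hss : H \ T h ⊂ H :=
        (Finset.ssubset_iff_of_subset Finset.sdiff_subset).mpr
          ⟨h, hh, fun hc => (Finset.mem_sdiff.mp hc).2 hhT⟩
      obtain ⟨S, hSsub, hSpair, hScard⟩ := ih (H \ T h) hss
        (fun a ha b hb hr => hT a (Finset.mem_sdiff.mp ha).1 b (Finset.mem_sdiff.mp hb).1 hr)
        (fun a ha => hTc a (Finset.mem_sdiff.mp ha).1)
      have hhS : h ∉ S := fun hc => (Finset.mem_sdiff.mp (hSsub hc)).2 hhT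
      refine ⟨insert h S, ?_, ?_, ?_⟩
      · exact Finset.insert_subset hh (hSsub.trans (Finset.sdiff_subset))
      · intro x hx y hy hxy
        rcases Finset.mem_insert.mp hx with rfl | hxS
        · rcases Finset.mem_insert.mp hy with rfl | hyS
          · exact absurd rfl hxy
          · intro hR
            have hyH : y ∈ H := (Finset.mem_sdiff.mp (hSsub hyS)).1
            have : y ∈ T x := hT x hh y hyH (Or.inl hR)
            exact (Finset.mem_sdiff.mp (hSsub hyS)).2 this
        · rcases Finset.mem_insert.mp hy with rfl | hyS
          · intro hR
            have hxH : x ∈ H := (Finset.mem_sdiff.mp (hSsub hxS)).1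
            have : x ∈ T y := hT y hh x hxH (Or.inr (Or.inl hR))
            exact (Finset.mem_sdiff.mp (hSsub hxS)).2 this
          · exact hSpair x hxS y hyS hxy
      · have h1 : H.card ≤ (H \ T h).card + M := by
          have h2 := Finset.card_le_card_sdiff_add_card (s := H) (t := T h)
          have h3 := hTc h hh
          omega
        have h2 : H.card / M ≤ ((H \ T h).card + M) / M := Nat.div_le_div_right h1
        rw [Nat.add_div_right _ hM] at h2
        have h3 : (insert h S).card = S.card + 1 := Finset.card_insert_of_notMem hhS
        calc H.card / M ≤ (H \ T h).card / M + 1 := h2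
          _ ≤ S.card + 1 := Nat.add_le_add_right hScard 1
          _ = (insert h S).card := h3.symm

/-- There are at least `q^t + 1` solutions of `x ^ (q^t+1) = -1` in `F`. -/
lemma card_sol (q t : ℕ) (hq3 : 3 ≤ q) (hqodd : Odd q) (ht : 0 < t)
    (hcard : Fintype.card F = q ^ (2*t))
    [DecidablePred fun x : F => x ^ (q^t+1) = (-1 : F)] :
    q ^ t + 1 ≤ (Finset.univ.filter (fun x : F => x ^ (q^t+1) = (-1:F))).card := by
  classical
  have hqt3 : 3 ≤ q ^ t := le_trans hq3 (Nat.le_self_pow (by omega) q)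
  have hqtodd : Odd (q ^ t) := hqodd.pow
  obtain ⟨v, hv⟩ := hqtodd
  obtain ⟨u, hu⟩ : ∃ u, q ^ t - 1 = 2 * u := ⟨v, by omega⟩
  have hupos : 0 < u := by omega
  set N := q ^ (2*t) - 1 with hN
  have hNum : N = 2 * u * (q ^ t + 1) := by
    have h1 : q ^ (2*t) = (q^t) * (q^t) := by rw [two_mul, pow_add]
    have h2 : q ^ t = 2*u + 1 := by omega
    have h3 : q ^ (2*t) = (2*u+1)*(2*u+1) := by rw [h1, h2]
    have h4 : (2*u+1)*(2*u+1) = 2*u*(q^t+1) + 1 := by rw [h2]; ring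
    omega
  have hNcard : Fintype.card Fˣ = N := by rw [Fintype.card_units, hcard]
  obtain ⟨g, hg⟩ := IsCyclic.exists_generator (α := Fˣ)
  have horder : orderOf g = N := by
    rw [orderOf_eq_card_of_forall_mem_zpowers hg, Nat.card_eq_fintype_card, hNcard]
  have hgN : g ^ N = 1 := by rw [← horder]; exact pow_orderOf_eq_one g
  -- the element z = g ^ (u * m) equals -1
  have hz2 : (g ^ (u * (q^t+1))) ^ 2 = 1 := by
    rw [← pow_mul, ← hgN]
    congr 1
    rw [hNum]; ring
  have hzne : g ^ (u * (q^t+1)) ≠ 1 := by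
    intro hcon
    have hdvd : orderOf g ∣ u * (q^t+1) := orderOf_dvd_of_pow_eq_one hcon
    rw [horder] at hdvd
    have hle : N ≤ u * (q^t+1) := Nat.le_of_dvd (by positivity) hdvd
    nlinarith [hNum]
  have hzval : ((g ^ (u * (q^t+1)) : Fˣ) : F) = -1 := by
    have h2 : ((g ^ (u*(q^t+1)) : Fˣ) : F) ^ 2 = 1 := by
      rw [← Units.val_pow_eq_pow_val, hz2, Units.val_one]
    have hne1 : ((g ^ (u*(q^t+1)) : Fˣ) : F) ≠ 1 := fun hc => hzne (Units.ext hc)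
    have hfac : (((g ^ (u*(q^t+1)) : Fˣ) : F) - 1) * (((g ^ (u*(q^t+1)) : Fˣ) : F) + 1) = 0 := by
      linear_combination h2
    rcases mul_eq_zero.mp hfac with hc | hc
    · exact absurd (by linear_combination hc) hne1
    · linear_combination hc
  -- x₀ = g ^ u satisfies x₀ ^ (q^t+1) = -1
  have hx0 : ((g ^ u : Fˣ) : F) ^ (q^t+1) = -1 := by
    rw [← Units.val_pow_eq_pow_val, ← pow_mul]
    exact hzval
  -- y = g ^ (2u) has order m
  set y : Fˣ := g ^ (2*u) with hy
  have hyorder : orderOf y = q^t+1 := by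
    rw [hy, orderOf_pow, horder, Nat.gcd_eq_right ⟨q^t+1, by omega⟩, hNum]
    exact Nat.mul_div_cancel_left (q^t+1) (by positivity)
  have hym : (y : F) ^ (q^t+1) = 1 := by
    rw [← Units.val_pow_eq_pow_val, ← hyorder, pow_orderOf_eq_one, Units.val_one]
  -- injection
  set f : ℕ → F := fun i => ((g ^ u : Fˣ) : F) * (y : F) ^ i with hf
  have hinj : Set.InjOn f (Finset.range (q^t+1)) := by
    intro i hi j hj hij
    simp only [hf] at hij
    have h1 : (y : F) ^ i = (y : F) ^ j := by
      field_simp at hij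
      exact hij
    have h2 : ((y ^ i : Fˣ) : F) = ((y ^ j : Fˣ) : F) := by
      simpa [Units.val_pow_eq_pow_val] using h1
    have h3 : y ^ i = y ^ j := Units.ext h2
    have := pow_injOn_Iio_orderOf (x := y)
      (by simpa [hyorder] using Finset.mem_range.mp (Finset.mem_coe.mp hi))
      (by simpa [hyorder] using Finset.mem_range.mp (Finset.mem_coe.mp hj)) h3
    exact this
  have hmemP : ∀ i : ℕ, f i ^ (q^t+1) = (-1:F) := by
    intro i
    simp only [hf]
    rw [mul_pow, ← pow_mul, mul_comm i (q^t+1), pow_mul, hym, one_pow, mul_one]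
    exact hx0
  calc q^t+1 = (Finset.range (q^t+1)).card := (Finset.card_range _).symm
    _ = ((Finset.range (q^t+1)).image f).card := (Finset.card_image_of_injOn hinj).symm
    _ ≤ _ := Finset.card_le_card (by
        intro x hx
        obtain ⟨i, hi, rfl⟩ := Finset.mem_image.mp hx
        simp only [Finset.mem_filter, Finset.mem_univ, true_and]
        exact hmemP i)

/-- The image of `h` under a field automorphism is a root of `minpoly (ZMod p) h`. -/
lemma conj_root (p : ℕ) [Fact p.Prime] [CharP F p] (ρ : F ≃+* F) (h : F) :
    letI : Algebra (ZMod p) F := ZMod.algebra F p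
    (Polynomial.aeval (ρ h)) (minpoly (ZMod p) h) = 0 := by
  letI : Algebra (ZMod p) F := ZMod.algebra F p
  have hcomm : ∀ z : ZMod p, ρ (algebraMap (ZMod p) F z) = algebraMap (ZMod p) F z := by
    intro z
    have : (ρ.toRingHom.comp (algebraMap (ZMod p) F)) = algebraMap (ZMod p) F :=
      RingHom.ext_zmod _ _
    exact RingHom.congr_fun this z
  let ρA : F ≃ₐ[ZMod p] F := AlgEquiv.ofRingEquiv (f := ρ) hcomm
  have h2 := Polynomial.aeval_algHom_apply (ρA.toAlgHom) h (minpoly (ZMod p) h)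
  rw [minpoly.aeval, map_zero] at h2
  exact h2

section Core

variable (p r q : ℕ) [Fact p.Prime] [CharP F p]

lemma psi_conj (t : ℕ) (ρ : F ≃+* F) (h x : F) :
    ρ (psiMap q t h x) = psiMap q t (ρ h) (ρ x) := by
  simp only [psiMap, map_add, map_sub, map_mul, map_div₀, map_pow]

set_option maxHeartbeats 1000000 in
lemma core (t : ℕ) (hpodd : Odd p) (hr : 0 < r) (hq : q = p ^ r) (ht : 4 < t)
    (hcard : Fintype.card F = q ^ (2*t)) (h k : F)
    (hh : h ^ (q^t+1) = -1) (hk : k ^ (q^t+1) = -1)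
    (heq : GammaLEquiv (Uspace q t h) (Uspace q t k)) :
    ∃ (ρ : F ≃+* F) (w : F), k = w * ρ h ∧ w ^ q ^ (t-2) = w ∧ w ^ (q^t+1) = 1 := by
  obtain ⟨ρ, A, hA, himg⟩ := heq
  have hqodd : Odd q := hq ▸ hpodd.pow
  have hoddq : ∀ s : ℕ, Odd (q ^ s) := fun s => hqodd.pow
  have hq2 : 2 ≤ q := by
    rw [hq]
    exact le_trans (Fact.out : p.Prime).two_le (Nat.le_self_pow hr.ne' p)
  have hqex : ∃ r', q = p ^ r' := ⟨r, hq⟩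
  -- the functional equation
  have hFE : ∀ y : F, A 1 0 * y + A 1 1 * psiMap q t (ρ h) y =
      psiMap q t k (A 0 0 * y + A 0 1 * psiMap q t (ρ h) y) := by
    intro y
    have hmem : (![ρ.symm y, psiMap q t h (ρ.symm y)]) ∈ Uspace q t h := ⟨ρ.symm y, rfl⟩
    have hmem2 : (fun w => A.mulVec fun i => ρ (w i)) ![ρ.symm y, psiMap q t h (ρ.symm y)]
        ∈ Uspace q t k := by
      rw [← himg]; exact Set.mem_image_of_mem _ hmem
    obtain ⟨z, hz⟩ := hmem2
    have h0 := congrFun hz 0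
    have h1 := congrFun hz 1
    simp only [Matrix.mulVec, dotProduct, Fin.sum_univ_two, Matrix.cons_val_zero,
      Matrix.cons_val_one, Matrix.head_cons] at h0 h1
    rw [psi_conj, RingEquiv.apply_symm_apply] at h0 h1
    rw [h1, h0]
  clear himg
  -- normalize t
  obtain ⟨t', rfl⟩ : ∃ t', t = t' + 5 := ⟨t - 5, by omega⟩
  have hq2t : Fintype.card F = q ^ (2*t'+10) := by rw [hcard]; ring_nf
  have hred : ∀ (x : F) (s : ℕ), x ^ q ^ (2*t'+10+s) = x ^ q ^ s := red q (2*t'+10) hq2t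
  have hfrobinj : ∀ (s : ℕ) (x y : F), x ^ q ^ s = y ^ q ^ s → x = y :=
    fun s x y hs => frob_inj p s x y q hqex hs
  set h' := ρ h with hh'def
  have hh' : h' ^ (q^(t'+5)+1) = -1 := by
    rw [hh'def, ← map_pow]
    rw [hh]
    simp
  have hh'0 : h' ≠ 0 := by
    intro h0
    rw [h0, zero_pow (by positivity)] at hh'
    exact (by norm_num : (0:F) ≠ -1) hh'
  have hk0 : k ≠ 0 := by
    intro h0
    rw [h0, zero_pow (by positivity)] at hk
    exact (by norm_num : (0:F) ≠ -1) hk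
  -- abbreviations
  set a := A 0 0 with hadef
  set b := A 0 1 with hbdef
  set cc := A 1 0 with hccdef
  set d := A 1 1 with hddef
  set A1 := h' / h' ^ q ^ (t'+6) with hA1def
  set B1 := h' / h' ^ q ^ (2*t'+9) with hB1def
  set α := k / k ^ q ^ (t'+6) with hαdef
  set β := k / k ^ q ^ (2*t'+9) with hβdef
  have hA10 : A1 ≠ 0 := div_ne_zero hh'0 (pow_ne_zero _ hh'0)
  have hB10 : B1 ≠ 0 := div_ne_zero hh'0 (pow_ne_zero _ hh'0)
  have hα0 : α ≠ 0 := div_ne_zero hk0 (pow_ne_zero _ hk0)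
  have hβ0 : β ≠ 0 := div_ne_zero hk0 (pow_ne_zero _ hk0)
  -- the 10 coefficients
  set C0 : F := (b*B1)^q^1 - (b*A1)^q^(t'+4) - α*b^q^(t'+6) + β*b^q^(2*t'+9) - cc with hC0
  set C1 : F := a^q^1 - d with hC1
  set C2 : F := b^q^1 + α*(b*A1)^q^(t'+6) with hC2
  set C3 : F := (b*B1)^q^(t'+4) + β*b^q^(2*t'+9) with hC3
  set C4 : F := a^q^(t'+4) - d with hC4
  set C5 : F := b^q^1 + b^q^(t'+4) - α*(b*B1)^q^(t'+6) - β*(b*A1)^q^(2*t'+9) with hC5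
  set C6 : F := -(α*a^q^(t'+6)) + d*A1 with hC6
  set C7 : F := -((b*A1)^q^1) - α*b^q^(t'+6) with hC7
  set C8 : F := b^q^(t'+4) + β*(b*B1)^q^(2*t'+9) with hC8
  set C9 : F := β*a^q^(2*t'+9) - d*B1 with hC9
  set ee : Fin 10 → ℕ := ![0, 1, 2, t'+3, t'+4, t'+5, t'+6, t'+7, 2*t'+8, 2*t'+9] with hee
  set co : Fin 10 → F := ![C0, C1, C2, C3, C4, C5, C6, C7, C8, C9] with hco
  -- pointwise vanishing
  have hv : ∀ y : F, ∑ i, co i * y ^ q ^ ee i = 0 := by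
    intro y
    have hEu := hFE y
    have et1 : t' + 5 - 1 = t' + 4 := by omega
    have et2 : t' + 5 + 1 = t' + 6 := by omega
    have et3 : 2 * (t' + 5) - 1 = 2 * t' + 9 := by omega
    simp only [psiMap, et1, et2, et3] at hEu
    rw [← hA1def, ← hB1def, ← hαdef, ← hβdef] at hEu
    -- five-term Frobenius additivity
    have hadd : ∀ (s : ℕ) (u1 u2 u3 u4 u5 : F), (u1+u2+u3+u4+u5)^q^s
        = u1^q^s + u2^q^s + u3^q^s + u4^q^s + u5^q^s := by
      intro s u1 u2 u3 u4 u5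
      rw [frob_add p s _ u5 q hqex, frob_add p s _ u4 q hqex, frob_add p s _ u3 q hqex,
        frob_add p s _ u2 q hqex]
    have hterm : ∀ (c z : F) (e s : ℕ), (c * z ^ q ^ e) ^ q ^ s = c ^ q ^ s * z ^ q ^ (e+s) := by
      intro c z e s
      rw [mul_pow, ← pow_mul, ← pow_add]
    set Z : F := a * y + b * (y ^ q ^ 1 + y ^ q ^ (t'+4) - A1 * y ^ q ^ (t'+6) + B1 * y ^ q ^ (2*t'+9)) with hZdef
    have hys : Z = a*y + b*y^q^1 + b*y^q^(t'+4) + (-(b*A1))*y^q^(t'+6) + (b*B1)*y^q^(2*t'+9) := by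
      rw [hZdef]; ring
    have hZ1 : Z ^ q ^ 1 = a^q^1 * y^q^1 + b^q^1 * y^q^2 + b^q^1 * y^q^(t'+5)
        - (b*A1)^q^1 * y^q^(t'+7) + (b*B1)^q^1 * y := by
      rw [hys, hadd 1, mul_pow a y, hterm b y 1 1, hterm b y (t'+4) 1,
        hterm (-(b*A1)) y (t'+6) 1, hterm (b*B1) y (2*t'+9) 1]
      rw [show 1+1 = 2 from by omega, show t'+4+1 = t'+5 from by omega,
        show t'+6+1 = t'+7 from by omega, show 2*t'+9+1 = 2*t'+10+0 from by omega,
        hred y 0, Odd.neg_pow (hoddq 1), pow_zero q, pow_one y]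
      ring
    have hZ2 : Z ^ q ^ (t'+4) = a^q^(t'+4) * y^q^(t'+4) + b^q^(t'+4) * y^q^(t'+5)
        + b^q^(t'+4) * y^q^(2*t'+8) - (b*A1)^q^(t'+4) * y + (b*B1)^q^(t'+4) * y^q^(t'+3) := by
      rw [hys, hadd (t'+4), mul_pow a y, hterm b y 1 (t'+4), hterm b y (t'+4) (t'+4),
        hterm (-(b*A1)) y (t'+6) (t'+4), hterm (b*B1) y (2*t'+9) (t'+4)]
      rw [show 1+(t'+4) = t'+5 from by omega, show t'+4+(t'+4) = 2*t'+8 from by omega,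
        show t'+6+(t'+4) = 2*t'+10+0 from by omega, show 2*t'+9+(t'+4) = 2*t'+10+(t'+3) from by omega,
        hred y 0, hred y (t'+3), Odd.neg_pow (hoddq (t'+4)), pow_zero q, pow_one y]
      ring
    have hZ3 : Z ^ q ^ (t'+6) = a^q^(t'+6) * y^q^(t'+6) + b^q^(t'+6) * y^q^(t'+7)
        + b^q^(t'+6) * y - (b*A1)^q^(t'+6) * y^q^2 + (b*B1)^q^(t'+6) * y^q^(t'+5) := by
      rw [hys, hadd (t'+6), mul_pow a y, hterm b y 1 (t'+6), hterm b y (t'+4) (t'+6),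
        hterm (-(b*A1)) y (t'+6) (t'+6), hterm (b*B1) y (2*t'+9) (t'+6)]
      rw [show 1+(t'+6) = t'+7 from by omega, show t'+4+(t'+6) = 2*t'+10+0 from by omega,
        show t'+6+(t'+6) = 2*t'+10+2 from by omega, show 2*t'+9+(t'+6) = 2*t'+10+(t'+5) from by omega,
        hred y 0, hred y 2, hred y (t'+5), Odd.neg_pow (hoddq (t'+6)), pow_zero q, pow_one y]
      ring
    have hZ4 : Z ^ q ^ (2*t'+9) = a^q^(2*t'+9) * y^q^(2*t'+9) + b^q^(2*t'+9) * y
        + b^q^(2*t'+9) * y^q^(t'+3) - (b*A1)^q^(2*t'+9) * y^q^(t'+5)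
        + (b*B1)^q^(2*t'+9) * y^q^(2*t'+8) := by
      rw [hys, hadd (2*t'+9), mul_pow a y, hterm b y 1 (2*t'+9), hterm b y (t'+4) (2*t'+9),
        hterm (-(b*A1)) y (t'+6) (2*t'+9), hterm (b*B1) y (2*t'+9) (2*t'+9)]
      rw [show 1+(2*t'+9) = 2*t'+10+0 from by omega, show t'+4+(2*t'+9) = 2*t'+10+(t'+3) from by omega,
        show t'+6+(2*t'+9) = 2*t'+10+(t'+5) from by omega,
        show 2*t'+9+(2*t'+9) = 2*t'+10+(2*t'+8) from by omega,
        hred y 0, hred y (t'+3), hred y (t'+5), hred y (2*t'+8), Odd.neg_pow (hoddq (2*t'+9)),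
        pow_zero q, pow_one y]
      ring
    -- assemble
    rw [Fin.sum_univ_succ, Fin.sum_univ_succ, Fin.sum_univ_succ, Fin.sum_univ_succ,
      Fin.sum_univ_succ, Fin.sum_univ_succ, Fin.sum_univ_succ, Fin.sum_univ_succ,
      Fin.sum_univ_succ, Fin.sum_univ_succ]
    rw [show (Finset.univ : Finset (Fin 0)) = ∅ from rfl, Finset.sum_empty]
    simp only [hco, hee, Matrix.cons_val_zero, Matrix.cons_val_one, Matrix.head_cons,
      Matrix.cons_val_succ]
    rw [hC0, hC1, hC2, hC3, hC4, hC5, hC6, hC7, hC8, hC9]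
    rw [pow_zero q, pow_one y]
    linear_combination (-1 : F)*hEu - hZ1 - hZ2 + α*hZ3 - β*hZ4
  -- linear independence gives the coefficient equations
  have hee_lt : ∀ i, ee i < 2*t'+10 := by
    intro i
    fin_cases i
    · exact (by omega : (0 : ℕ) < 2*t'+10)
    · exact (by omega : (1 : ℕ) < 2*t'+10)
    · exact (by omega : (2 : ℕ) < 2*t'+10)
    · exact (by omega : (t'+3 : ℕ) < 2*t'+10)
    · exact (by omega : (t'+4 : ℕ) < 2*t'+10)
    · exact (by omega : (t'+5 : ℕ) < 2*t'+10)
    · exact (by omega : (t'+6 : ℕ) < 2*t'+10)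
    · exact (by omega : (t'+7 : ℕ) < 2*t'+10)
    · exact (by omega : (2*t'+8 : ℕ) < 2*t'+10)
    · exact (by omega : (2*t'+9 : ℕ) < 2*t'+10)
  have hee_inj : ∀ i j, ee i = ee j → i = j := by
    intro i j
    fin_cases i <;> fin_cases j
    · exact fun _ => rfl
    · exact fun hh => absurd (show (0 : ℕ) = 1 from hh) (by omega)
    · exact fun hh => absurd (show (0 : ℕ) = 2 from hh) (by omega)
    · exact fun hh => absurd (show (0 : ℕ) = t'+3 from hh) (by omega)
    · exact fun hh => absurd (show (0 : ℕ) = t'+4 from hh) (by omega)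
    · exact fun hh => absurd (show (0 : ℕ) = t'+5 from hh) (by omega)
    · exact fun hh => absurd (show (0 : ℕ) = t'+6 from hh) (by omega)
    · exact fun hh => absurd (show (0 : ℕ) = t'+7 from hh) (by omega)
    · exact fun hh => absurd (show (0 : ℕ) = 2*t'+8 from hh) (by omega)
    · exact fun hh => absurd (show (0 : ℕ) = 2*t'+9 from hh) (by omega)
    · exact fun hh => absurd (show (1 : ℕ) = 0 from hh) (by omega)
    · exact fun _ => rfl
    · exact fun hh => absurd (show (1 : ℕ) = 2 from hh) (by omega)
    · exact fun hh => absurd (show (1 : ℕ) = t'+3 from hh) (by omega)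
    · exact fun hh => absurd (show (1 : ℕ) = t'+4 from hh) (by omega)
    · exact fun hh => absurd (show (1 : ℕ) = t'+5 from hh) (by omega)
    · exact fun hh => absurd (show (1 : ℕ) = t'+6 from hh) (by omega)
    · exact fun hh => absurd (show (1 : ℕ) = t'+7 from hh) (by omega)
    · exact fun hh => absurd (show (1 : ℕ) = 2*t'+8 from hh) (by omega)
    · exact fun hh => absurd (show (1 : ℕ) = 2*t'+9 from hh) (by omega)
    · exact fun hh => absurd (show (2 : ℕ) = 0 from hh) (by omega)
    · exact fun hh => absurd (show (2 : ℕ) = 1 from hh) (by omega)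
    · exact fun _ => rfl
    · exact fun hh => absurd (show (2 : ℕ) = t'+3 from hh) (by omega)
    · exact fun hh => absurd (show (2 : ℕ) = t'+4 from hh) (by omega)
    · exact fun hh => absurd (show (2 : ℕ) = t'+5 from hh) (by omega)
    · exact fun hh => absurd (show (2 : ℕ) = t'+6 from hh) (by omega)
    · exact fun hh => absurd (show (2 : ℕ) = t'+7 from hh) (by omega)
    · exact fun hh => absurd (show (2 : ℕ) = 2*t'+8 from hh) (by omega)
    · exact fun hh => absurd (show (2 : ℕ) = 2*t'+9 from hh) (by omega)
    · exact fun hh => absurd (show (t'+3 : ℕ) = 0 from hh) (by omega)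
    · exact fun hh => absurd (show (t'+3 : ℕ) = 1 from hh) (by omega)
    · exact fun hh => absurd (show (t'+3 : ℕ) = 2 from hh) (by omega)
    · exact fun _ => rfl
    · exact fun hh => absurd (show (t'+3 : ℕ) = t'+4 from hh) (by omega)
    · exact fun hh => absurd (show (t'+3 : ℕ) = t'+5 from hh) (by omega)
    · exact fun hh => absurd (show (t'+3 : ℕ) = t'+6 from hh) (by omega)
    · exact fun hh => absurd (show (t'+3 : ℕ) = t'+7 from hh) (by omega)
    · exact fun hh => absurd (show (t'+3 : ℕ) = 2*t'+8 from hh) (by omega)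
    · exact fun hh => absurd (show (t'+3 : ℕ) = 2*t'+9 from hh) (by omega)
    · exact fun hh => absurd (show (t'+4 : ℕ) = 0 from hh) (by omega)
    · exact fun hh => absurd (show (t'+4 : ℕ) = 1 from hh) (by omega)
    · exact fun hh => absurd (show (t'+4 : ℕ) = 2 from hh) (by omega)
    · exact fun hh => absurd (show (t'+4 : ℕ) = t'+3 from hh) (by omega)
    · exact fun _ => rfl
    · exact fun hh => absurd (show (t'+4 : ℕ) = t'+5 from hh) (by omega)
    · exact fun hh => absurd (show (t'+4 : ℕ) = t'+6 from hh) (by omega)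
    · exact fun hh => absurd (show (t'+4 : ℕ) = t'+7 from hh) (by omega)
    · exact fun hh => absurd (show (t'+4 : ℕ) = 2*t'+8 from hh) (by omega)
    · exact fun hh => absurd (show (t'+4 : ℕ) = 2*t'+9 from hh) (by omega)
    · exact fun hh => absurd (show (t'+5 : ℕ) = 0 from hh) (by omega)
    · exact fun hh => absurd (show (t'+5 : ℕ) = 1 from hh) (by omega)
    · exact fun hh => absurd (show (t'+5 : ℕ) = 2 from hh) (by omega)
    · exact fun hh => absurd (show (t'+5 : ℕ) = t'+3 from hh) (by omega)
    · exact fun hh => absurd (show (t'+5 : ℕ) = t'+4 from hh) (by omega)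
    · exact fun _ => rfl
    · exact fun hh => absurd (show (t'+5 : ℕ) = t'+6 from hh) (by omega)
    · exact fun hh => absurd (show (t'+5 : ℕ) = t'+7 from hh) (by omega)
    · exact fun hh => absurd (show (t'+5 : ℕ) = 2*t'+8 from hh) (by omega)
    · exact fun hh => absurd (show (t'+5 : ℕ) = 2*t'+9 from hh) (by omega)
    · exact fun hh => absurd (show (t'+6 : ℕ) = 0 from hh) (by omega)
    · exact fun hh => absurd (show (t'+6 : ℕ) = 1 from hh) (by omega)
    · exact fun hh => absurd (show (t'+6 : ℕ) = 2 from hh) (by omega)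
    · exact fun hh => absurd (show (t'+6 : ℕ) = t'+3 from hh) (by omega)
    · exact fun hh => absurd (show (t'+6 : ℕ) = t'+4 from hh) (by omega)
    · exact fun hh => absurd (show (t'+6 : ℕ) = t'+5 from hh) (by omega)
    · exact fun _ => rfl
    · exact fun hh => absurd (show (t'+6 : ℕ) = t'+7 from hh) (by omega)
    · exact fun hh => absurd (show (t'+6 : ℕ) = 2*t'+8 from hh) (by omega)
    · exact fun hh => absurd (show (t'+6 : ℕ) = 2*t'+9 from hh) (by omega)
    · exact fun hh => absurd (show (t'+7 : ℕ) = 0 from hh) (by omega)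
    · exact fun hh => absurd (show (t'+7 : ℕ) = 1 from hh) (by omega)
    · exact fun hh => absurd (show (t'+7 : ℕ) = 2 from hh) (by omega)
    · exact fun hh => absurd (show (t'+7 : ℕ) = t'+3 from hh) (by omega)
    · exact fun hh => absurd (show (t'+7 : ℕ) = t'+4 from hh) (by omega)
    · exact fun hh => absurd (show (t'+7 : ℕ) = t'+5 from hh) (by omega)
    · exact fun hh => absurd (show (t'+7 : ℕ) = t'+6 from hh) (by omega)
    · exact fun _ => rfl
    · exact fun hh => absurd (show (t'+7 : ℕ) = 2*t'+8 from hh) (by omega)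
    · exact fun hh => absurd (show (t'+7 : ℕ) = 2*t'+9 from hh) (by omega)
    · exact fun hh => absurd (show (2*t'+8 : ℕ) = 0 from hh) (by omega)
    · exact fun hh => absurd (show (2*t'+8 : ℕ) = 1 from hh) (by omega)
    · exact fun hh => absurd (show (2*t'+8 : ℕ) = 2 from hh) (by omega)
    · exact fun hh => absurd (show (2*t'+8 : ℕ) = t'+3 from hh) (by omega)
    · exact fun hh => absurd (show (2*t'+8 : ℕ) = t'+4 from hh) (by omega)
    · exact fun hh => absurd (show (2*t'+8 : ℕ) = t'+5 from hh) (by omega)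
    · exact fun hh => absurd (show (2*t'+8 : ℕ) = t'+6 from hh) (by omega)
    · exact fun hh => absurd (show (2*t'+8 : ℕ) = t'+7 from hh) (by omega)
    · exact fun _ => rfl
    · exact fun hh => absurd (show (2*t'+8 : ℕ) = 2*t'+9 from hh) (by omega)
    · exact fun hh => absurd (show (2*t'+9 : ℕ) = 0 from hh) (by omega)
    · exact fun hh => absurd (show (2*t'+9 : ℕ) = 1 from hh) (by omega)
    · exact fun hh => absurd (show (2*t'+9 : ℕ) = 2 from hh) (by omega)
    · exact fun hh => absurd (show (2*t'+9 : ℕ) = t'+3 from hh) (by omega)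
    · exact fun hh => absurd (show (2*t'+9 : ℕ) = t'+4 from hh) (by omega)
    · exact fun hh => absurd (show (2*t'+9 : ℕ) = t'+5 from hh) (by omega)
    · exact fun hh => absurd (show (2*t'+9 : ℕ) = t'+6 from hh) (by omega)
    · exact fun hh => absurd (show (2*t'+9 : ℕ) = t'+7 from hh) (by omega)
    · exact fun hh => absurd (show (2*t'+9 : ℕ) = 2*t'+8 from hh) (by omega)
    · exact fun _ => rfl
  have hco0 := li q (2*t'+10) hq2 hq2t ee hee_lt hee_inj co hv
  have e1 : C1 = 0 := by have := hco0 1; rwa [show co 1 = C1 from rfl] at this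
  have e2 : C2 = 0 := by have := hco0 2; rwa [show co 2 = C2 from rfl] at this
  have e4 : C4 = 0 := by have := hco0 4; rwa [show co 4 = C4 from rfl] at this
  have e6 : C6 = 0 := by have := hco0 6; rwa [show co 6 = C6 from rfl] at this
  have e8 : C8 = 0 := by have := hco0 8; rwa [show co 8 = C8 from rfl] at this
  have e9 : C9 = 0 := by have := hco0 9; rwa [show co 9 = C9 from rfl] at this
  rw [hC1] at e1
  rw [hC2] at e2
  rw [hC4] at e4
  rw [hC6] at e6
  rw [hC8] at e8
  rw [hC9] at e9
  have eq1 : a ^ q ^ 1 = d := by linear_combination e1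
  have eq4 : a ^ q ^ (t'+4) = d := by linear_combination e4
  have eq6 : α * a ^ q ^ (t'+6) = d * A1 := by linear_combination -e6
  have eq9 : β * a ^ q ^ (2*t'+9) = d * B1 := by linear_combination e9
  have hS0 : k ^ q ^ (2*t'+9) ≠ 0 := pow_ne_zero _ hk0
  have hT0 : k ^ q ^ (t'+6) ≠ 0 := pow_ne_zero _ hk0
  have hhS0 : h' ^ q ^ (2*t'+9) ≠ 0 := pow_ne_zero _ hh'0
  have hhT0 : h' ^ q ^ (t'+6) ≠ 0 := pow_ne_zero _ hh'0
  -- main claim: the ratio w = k / h' is fixed by the (t'+3)-rd Frobenius power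
  have hw : (k / h') ^ q ^ (t'+3) = k / h' := by
    by_cases ha : a = 0
    · -- antidiagonal case
      have hd : d = 0 := by rw [← eq1, ha, zero_pow (by positivity)]
      have hb : b ≠ 0 := by
        intro hb0
        have hdet := hA
        rw [Matrix.isUnit_iff_isUnit_det, Matrix.det_fin_two] at hdet
        rw [← hadef, ← hbdef, ← hccdef, ← hddef, ha, hb0] at hdet
        simp at hdet
      -- raise eq2 to the q^(t'+3)
      have h2 : b ^ q ^ 1 = -(α * (b*A1) ^ q ^ (t'+6)) := by linear_combination e2
      have h3 := congrArg (· ^ q ^ (t'+3)) h2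
      rw [← pow_mul, ← pow_add, show 1+(t'+3) = t'+4 from by omega,
        Odd.neg_pow (hoddq (t'+3)), mul_pow, ← pow_mul (b*A1), ← pow_add,
        show (t'+6)+(t'+3) = 2*t'+9 from by omega] at h3
      have h8 : b ^ q ^ (t'+4) = -(β * (b*B1) ^ q ^ (2*t'+9)) := by linear_combination e8
      have hc : β * (b*B1) ^ q ^ (2*t'+9) = α ^ q ^ (t'+3) * (b*A1) ^ q ^ (2*t'+9) := by
        linear_combination h8 - h3
      rw [mul_pow b B1, mul_pow b A1] at hc
      have hbS : b ^ q ^ (2*t'+9) ≠ 0 := pow_ne_zero _ hb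
      have hc2 : β * B1 ^ q ^ (2*t'+9) = α ^ q ^ (t'+3) * A1 ^ q ^ (2*t'+9) :=
        mul_right_cancel₀ hbS (by linear_combination hc)
      -- unfold and clear denominators
      rw [hαdef, hβdef, hA1def, hB1def, div_pow, div_pow, div_pow] at hc2
      rw [← pow_mul h' (q ^ (2*t'+9)), ← pow_add, show (2*t'+9)+(2*t'+9) = 2*t'+10+(2*t'+8) from by omega,
        hred h' (2*t'+8)] at hc2
      rw [← pow_mul k (q ^ (t'+6)), ← pow_add, show (t'+6)+(t'+3) = 2*t'+9 from by omega] at hc2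
      rw [← pow_mul h' (q ^ (t'+6)), ← pow_add, show (t'+6)+(2*t'+9) = 2*t'+10+(t'+5) from by omega,
        hred h' (t'+5)] at hc2
      -- hc2 : (k / k^S) * (h'^S / h'^(2t'+8)) = (k^(t'+3) / k^S) * (h'^S / h'^(t'+5))
      have hc3 : k * h' ^ q ^ (t'+5) = k ^ q ^ (t'+3) * h' ^ q ^ (2*t'+8) := by
        have hne8 : h' ^ q ^ (2*t'+8) ≠ 0 := pow_ne_zero _ hh'0
        have hne5 : h' ^ q ^ (t'+5) ≠ 0 := pow_ne_zero _ hh'0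
        rw [div_mul_div_comm, div_mul_div_comm,
          div_eq_div_iff (mul_ne_zero hS0 hne8) (mul_ne_zero hS0 hne5)] at hc2
        refine mul_right_cancel₀ (mul_ne_zero hS0 hhS0) ?_
        linear_combination hc2
      have hfin : (k * h' ^ q ^ (t'+5)) ^ q ^ (t'+3) = k * h' ^ q ^ (t'+5) := by
        rw [mul_pow, ← pow_mul h', ← pow_add, show (t'+5)+(t'+3) = 2*t'+8 from by omega]
        exact hc3.symm
      have hh'2 : h' ^ q ^ (t'+5) * h' = -1 := by
        rw [← hh', pow_add h' (q^(t'+5)) 1, pow_one]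
      have hwexp : k / h' = -(k * h' ^ q ^ (t'+5)) := by
        rw [div_eq_iff hh'0]
        linear_combination k * hh'2
      rw [hwexp, Odd.neg_pow (hoddq (t'+3)), hfin]
    · -- diagonal case
      have haQ : a ^ q ^ (t'+3) = a := by
        refine hfrobinj 1 _ _ ?_
        rw [← pow_mul, ← pow_add, show t'+3+1 = t'+4 from by omega, eq4, eq1]
      have haT : a ^ q ^ (t'+6) = a ^ q ^ 3 := by
        calc a ^ q ^ (t'+6) = (a ^ q ^ (t'+3)) ^ q ^ 3 := by
              rw [← pow_mul, ← pow_add]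
          _ = a ^ q ^ 3 := by rw [haQ]
      have haS : a ^ q ^ (2*t'+9) = a ^ q ^ 3 := by
        calc a ^ q ^ (2*t'+9) = (a ^ q ^ (t'+3)) ^ q ^ (t'+6) := by
              rw [← pow_mul, ← pow_add, show (t'+3)+(t'+6) = 2*t'+9 from by omega]
          _ = a ^ q ^ (t'+6) := by rw [haQ]
          _ = a ^ q ^ 3 := haT
      rw [haT] at eq6
      rw [haS] at eq9
      have h5 : (α * a ^ q ^ 3) * B1 = (β * a ^ q ^ 3) * A1 := by
        rw [eq6, eq9, ← eq1]; ring
      have ha3 : a ^ q ^ 3 ≠ 0 := pow_ne_zero _ ha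
      have h6 : α * B1 = β * A1 := mul_right_cancel₀ ha3 (by linear_combination h5)
      rw [hαdef, hβdef, hA1def, hB1def] at h6
      -- (k/k^T)*(h'/h'^S) = (k/k^S)*(h'/h'^T)
      have h7 : k ^ q ^ (2*t'+9) * h' ^ q ^ (t'+6) = k ^ q ^ (t'+6) * h' ^ q ^ (2*t'+9) := by
        have hkh : k * h' ≠ 0 := mul_ne_zero hk0 hh'0
        rw [div_mul_div_comm, div_mul_div_comm,
          div_eq_div_iff (mul_ne_zero hT0 hhS0) (mul_ne_zero hS0 hhT0)] at h6
        refine mul_left_cancel₀ hkh ?_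
        linear_combination h6
      have h8' : (k / h') ^ q ^ (2*t'+9) = (k / h') ^ q ^ (t'+6) := by
        rw [div_pow, div_pow, div_eq_div_iff hhS0 hhT0]
        linear_combination h7
      refine hfrobinj (t'+6) _ _ ?_
      rw [← pow_mul, ← pow_add, show (t'+3)+(t'+6) = 2*t'+9 from by omega]
      exact h8'
  refine ⟨ρ, k / h', ?_, ?_, ?_⟩
  · rw [← hh'def, div_mul_cancel₀ k hh'0]
  · rw [show t'+5-2 = t'+3 from by omega]
    exact hw
  · rw [div_pow, hk, hh']
    norm_num

theorem stmt12' (p r q t : ℕ) (hp : p.Prime) (hpodd : Odd p) (hr : 0 < r)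
    (hq : q = p ^ r) (ht : 4 < t)
    (F : Type*) [Field F] [Fintype F] (hcard : Fintype.card F = q ^ (2 * t)) :
    (t % 4 ≠ 2 →
      ∃ S : Finset F, (∀ h ∈ S, h ^ (q ^ t + 1) = (-1 : F)) ∧
        (∀ h ∈ S, ∀ k ∈ S, h ≠ k → ¬ GammaLEquiv (Uspace q t h) (Uspace q t k)) ∧
        (q ^ t + 1) / (4 * r * t) ≤ S.card) ∧
    (t % 4 = 2 →
      ∃ S : Finset F, (∀ h ∈ S, h ^ (q ^ t + 1) = (-1 : F)) ∧
        (∀ h ∈ S, ∀ k ∈ S, h ≠ k → ¬ GammaLEquiv (Uspace q t h) (Uspace q t k)) ∧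
        (q ^ t + 1) / (2 * r * t * (q ^ 2 + 1)) ≤ S.card) := by
  classical
  haveI hfact : Fact p.Prime := ⟨hp⟩
  haveI hchar : CharP F p := charP_of_card p r (2*t) hp hr (by omega) (by rw [hcard, hq])
  letI : Algebra (ZMod p) F := ZMod.algebra F p
  have hq3 : 3 ≤ q := by
    rcases hpodd with ⟨c, hc⟩
    have hp2 : 2 ≤ p := hp.two_le
    have hp3 : 3 ≤ p := by omega
    rw [hq]
    exact le_trans hp3 (Nat.le_self_pow hr.ne' p)
  have hq2 : 2 ≤ q := by omega
  have hqodd : Odd q := hq ▸ hpodd.pow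
  set Wn := if t % 4 = 2 then q^2+1 else 2 with hWn
  have hWnpos : 0 < Wn := by rw [hWn]; split <;> positivity
  set R : F → F → Prop := fun h k => GammaLEquiv (Uspace q t h) (Uspace q t k) with hR
  set H : Finset F := Finset.univ.filter (fun x : F => x ^ (q^t+1) = -1) with hH
  set T : F → Finset F := fun h =>
    Finset.image (fun pr : F × F => pr.1 * pr.2)
      ((Finset.univ.filter (fun w : F => w ^ Wn = 1)) ×ˢ
        ((minpoly (ZMod p) h).aroots F).toFinset) with hT
  -- finrank computation
  have hfinrank : Module.finrank (ZMod p) F = 2*r*t := by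
    have h1 : Fintype.card F = Fintype.card (ZMod p) ^ Module.finrank (ZMod p) F :=
      Module.card_eq_pow_finrank
    rw [ZMod.card, hcard, hq, ← pow_mul] at h1
    have h2 := Nat.pow_right_injective hp.two_le h1.symm
    rw [h2]; ring
  -- cardinality bound for T
  have hTcard : ∀ h : F, (T h).card ≤ Wn * (2*r*t) := by
    intro h
    rw [hT]
    refine le_trans Finset.card_image_le ?_
    rw [Finset.card_product]
    refine Nat.mul_le_mul (card_pow_eq_one_le Wn hWnpos) ?_
    refine le_trans (Multiset.toFinset_card_le _) ?_
    refine le_trans (Polynomial.card_roots' _) ?_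
    refine le_trans Polynomial.natDegree_map_le ?_
    rw [← hfinrank]
    exact minpoly.natDegree_le h
  -- membership of conjugates in T
  have hrootmem : ∀ (h : F) (ρ : F ≃+* F), ρ h ∈ ((minpoly (ZMod p) h).aroots F).toFinset := by
    intro h ρ
    rw [Multiset.mem_toFinset, Polynomial.mem_aroots]
    exact ⟨minpoly.ne_zero (IsIntegral.of_finite (ZMod p) h), conj_root p ρ h⟩
  have hWmem : ∀ w : F, w ^ q ^ (t-2) = w → w ^ (q^t+1) = 1 → w ^ Wn = 1 := by
    intro w h1 h2
    have hwc := w_cases q t hq2 ht hcard w h1 h2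
    rw [hWn]
    split_ifs with h42
    · exact hwc.2 h42
    · exact hwc.1 h42
  have hTmem : ∀ (h k w : F) (ρ : F ≃+* F), k = w * ρ h → w ^ Wn = 1 → k ∈ T h := by
    intro h k w ρ hkw hwn
    rw [hT]
    refine Finset.mem_image.mpr ⟨(w, ρ h), ?_, hkw.symm⟩
    rw [Finset.mem_product]
    exact ⟨Finset.mem_filter.mpr ⟨Finset.mem_univ _, hwn⟩, hrootmem h ρ⟩
  -- the main combinatorial hypothesis
  have hmain : ∀ h ∈ H, ∀ k ∈ H, (R h k ∨ R k h ∨ k = h) → k ∈ T h := by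
    intro h hh k hk hcase
    have hhm : h ^ (q^t+1) = -1 := (Finset.mem_filter.mp hh).2
    have hkm : k ^ (q^t+1) = -1 := (Finset.mem_filter.mp hk).2
    rcases hcase with hRhk | hRkh | rfl
    · obtain ⟨ρ, w, hkw, hw1, hw2⟩ :=
        core p r q t hpodd hr hq ht hcard h k hhm hkm hRhk
      exact hTmem h k w ρ hkw (hWmem w hw1 hw2)
    · obtain ⟨ρ, w, hkw, hw1, hw2⟩ :=
        core p r q t hpodd hr hq ht hcard k h hkm hhm hRkh
      have hw0 : w ≠ 0 := by
        intro h0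
        rw [h0, zero_pow (by positivity)] at hw2
        simp at hw2
      have hkval : k = (ρ.symm w)⁻¹ * ρ.symm h := by
        have := congrArg ρ.symm hkw
        rw [map_mul, RingEquiv.symm_apply_apply] at this
        have hsw0 : ρ.symm w ≠ 0 := fun hc => hw0 (by
          have := congrArg ρ hc
          rwa [RingEquiv.apply_symm_apply, map_zero] at this)
        field_simp [this]
        linear_combination -this
      have hwn : ((ρ.symm w)⁻¹) ^ Wn = 1 := by
        have h1 : (ρ.symm w) ^ Wn = 1 := by
          rw [← map_pow, hWmem w hw1 hw2, map_one]
        rw [inv_pow, h1, inv_one]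
      exact hTmem h k _ ρ.symm hkval hwn
    · refine hTmem k k 1 (RingEquiv.refl F) ?_ (one_pow Wn)
      rw [one_mul]; rfl
  -- extraction
  obtain ⟨S, hSsub, hSpair, hScard⟩ :=
    extract R T (Wn * (2*r*t)) (by positivity) H hmain (fun h _ => hTcard h)
  have hSsol : ∀ h ∈ S, h ^ (q^t+1) = (-1:F) :=
    fun h hhS => (Finset.mem_filter.mp (hSsub hhS)).2
  have hHcard : q^t+1 ≤ H.card := card_sol q t hq3 hqodd (by omega) hcard
  have hchain : (q^t+1) / (Wn * (2*r*t)) ≤ S.card :=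
    le_trans (Nat.div_le_div_right hHcard) hScard
  constructor
  · intro h42
    refine ⟨S, hSsol, hSpair, ?_⟩
    have hWn2 : Wn = 2 := by rw [hWn, if_neg h42]
    rw [hWn2] at hchain
    have : 4*r*t = 2*(2*r*t) := by ring
    rw [this]
    exact hchain
  · intro h42
    refine ⟨S, hSsol, hSpair, ?_⟩
    have hWn2 : Wn = q^2+1 := by rw [hWn, if_pos h42]
    rw [hWn2] at hchain
    have : 2*r*t*(q^2+1) = (q^2+1)*(2*r*t) := by ring
    rw [this]
    exact hchain

end Core

end Stmt12Aux

/-- For `q = p^r`, `p` odd prime, `t > 4`: the number of `ΓL(2,q^n)`-equivalence classes of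
the family `{U_h : h^{q^t+1} = -1}` is at least `⌊(q^t+1)/(4rt)⌋` if `t ≢ 2 (mod 4)`, and
at least `⌊(q^t+1)/(2rt(q²+1))⌋` if `t ≡ 2 (mod 4)`; i.e. there exist that many pairwise
inequivalent members. -/
theorem stmt12 (p r q t : ℕ) (hp : p.Prime) (hpodd : Odd p) (hr : 0 < r)
    (hq : q = p ^ r) (ht : 4 < t)
    (F : Type*) [Field F] [Fintype F] (hcard : Fintype.card F = q ^ (2 * t)) :
    (t % 4 ≠ 2 →
      ∃ S : Finset F, (∀ h ∈ S, h ^ (q ^ t + 1) = (-1 : F)) ∧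
        (∀ h ∈ S, ∀ k ∈ S, h ≠ k → ¬ GammaLEquiv (Uspace q t h) (Uspace q t k)) ∧
        (q ^ t + 1) / (4 * r * t) ≤ S.card) ∧
    (t % 4 = 2 →
      ∃ S : Finset F, (∀ h ∈ S, h ^ (q ^ t + 1) = (-1 : F)) ∧
        (∀ h ∈ S, ∀ k ∈ S, h ≠ k → ¬ GammaLEquiv (Uspace q t h) (Uspace q t k)) ∧
        (q ^ t + 1) / (2 * r * t * (q ^ 2 + 1)) ≤ S.card) := by
  exact Stmt12Aux.stmt12' p r q t hp hpodd hr hq ht F hcard
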